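/- Let m ≥ 1 and α_j = 1/(1 − cos(2πj/(2m+1))) for j = 1,…,m, and let λ be any complex number with square root τ. Define E_j = [[1−α_j, −α_j τ],[−α_j τ, 1−α_j]], S = E_m⋯E_1, and E_c = [[1, τ],[0, 0]]. Then the eigenvalues of S E_c S are exactly 0 and 1/(2m+1)^2, independent of λ. -/

import Mathlib

open Matrix Finset Complex Polynomial


lemma prod_x_sub (n : ℕ) (hn : 0 < n) {ζ : ℂ} (hζ : IsPrimitiveRoot ζ n) (x : ℂ) :
    ∏ i ∈ Finset.range n, (x - ζ ^ i) = x ^ n - 1 := by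
  have h := congrArg (Polynomial.eval x) (X_pow_sub_C_eq_prod hζ hn (one_pow n))
  simpa [eval_prod] using h.symm

lemma prod_one_sub (n : ℕ) (hn : 0 < n) {ζ : ℂ} (hζ : IsPrimitiveRoot ζ n) :
    ∏ i ∈ Finset.Ico 1 n, (1 - ζ ^ i) = n := by
  have key : ∏ i ∈ Finset.Ico 1 n, (X - C (ζ ^ i)) = ∑ i ∈ Finset.range n, (X : ℂ[X]) ^ i := by
    apply mul_left_cancel₀ (X_sub_C_ne_zero (1 : ℂ))
    have h1 : (X ^ n - Polynomial.C 1 : ℂ[X]) = ∏ i ∈ Finset.range n, (X - C (ζ ^ i)) := by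
      simpa using X_pow_sub_C_eq_prod hζ hn (one_pow n)
    have h2 : ∏ i ∈ Finset.range n, (X - C (ζ ^ i))
        = (X - C (ζ ^ 0)) * ∏ i ∈ Finset.Ico 1 n, (X - C (ζ ^ i)) := by
      rw [Finset.range_eq_Ico, Finset.prod_eq_prod_Ico_succ_bot hn]
    have h3 := geom_sum_mul (X : ℂ[X]) n
    calc (X - C 1) * ∏ i ∈ Finset.Ico 1 n, (X - C (ζ ^ i))
        = (X - C (ζ ^ 0)) * ∏ i ∈ Finset.Ico 1 n, (X - C (ζ ^ i)) := by rw [pow_zero]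
      _ = X ^ n - Polynomial.C 1 := by rw [← h2, ← h1]
      _ = (X - C 1) * ∑ i ∈ Finset.range n, (X : ℂ[X]) ^ i := by
            rw [Polynomial.C_1]; rw [mul_comm]; simpa using h3.symm
  have := congrArg (Polynomial.eval 1) key
  simpa [eval_prod, eval_finset_sum] using this

lemma prod_refl_Ico (n : ℕ) (g : ℕ → ℂ) :
    ∏ j ∈ Finset.Ico 1 n, g (n - j) = ∏ j ∈ Finset.Ico 1 n, g j := by
  refine Finset.prod_nbij' (fun j => n - j) (fun j => n - j) ?_ ?_ ?_ ?_ ?_ <;>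
    intro a ha <;> simp only [Finset.mem_Ico] at * <;> omega

lemma prod_reflect' (m : ℕ) (f : ℕ → ℂ)
    (hsym : ∀ j, 1 ≤ j → j ≤ 2*m → f (2*m+1-j) = f j) :
    ∏ j ∈ Finset.Ico 1 (2*m+1), f j = (∏ i ∈ Finset.range m, f (i+1))^2 := by
  have hIoc : Finset.Ico 1 (2*m+1) = Finset.Ioc 0 (2*m) := by
    rw [Finset.Ico_add_one_right_eq_Icc, show (1:ℕ) = 0+1 from rfl, Finset.Icc_add_one_left_eq_Ioc]
  have hsplit : ∏ j ∈ Finset.Ico 1 (2*m+1), f j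
      = (∏ j ∈ Finset.Ioc 0 m, f j) * ∏ j ∈ Finset.Ioc m (2*m), f j := by
    rw [hIoc, Finset.prod_Ioc_consecutive _ (Nat.zero_le m) (by omega)]
  have hrefl : ∏ j ∈ Finset.Ioc m (2*m), f j = ∏ j ∈ Finset.Ioc 0 m, f j := by
    refine Finset.prod_nbij' (fun j => 2*m+1 - j) (fun j => 2*m+1 - j) ?_ ?_ ?_ ?_ ?_ <;>
      intro a ha <;> simp only [Finset.mem_Ioc] at *
    · omega
    · omega
    · omega
    · omega
    · rw [← hsym (2*m+1-a) (by omega) (by omega)]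
      congr 1
      omega
  have hrange : ∏ j ∈ Finset.Ioc 0 m, f j = ∏ i ∈ Finset.range m, f (i+1) := by
    rw [show Finset.Ioc 0 m = Finset.Ico 1 (m+1) by
      rw [Finset.Ico_add_one_right_eq_Icc, show (1:ℕ) = 0+1 from rfl, Finset.Icc_add_one_left_eq_Ioc],
      Finset.prod_Ico_eq_prod_range]
    simp [add_comm]
  rw [hsplit, hrefl, hrange, sq]

lemma prod_reflect (m : ℕ) (f : ℕ → ℂ)
    (hsym : ∀ j, 1 ≤ j → j ≤ 2*m → f (2*m+1-j) = f j) :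
    ∏ j ∈ Finset.range (2*m+1), f j = f 0 * (∏ i ∈ Finset.range m, f (i+1))^2 := by
  rw [Finset.range_eq_Ico, Finset.prod_eq_prod_Ico_succ_bot (by omega), prod_reflect' m f hsym, Finset.range_eq_Ico]

noncomputable def Phi : (ℂ × ℂ) →* Matrix (Fin 2) (Fin 2) ℂ where
  toFun p := !![(p.1 + p.2)/2, (p.1 - p.2)/2; (p.1 - p.2)/2, (p.1 + p.2)/2]
  map_one' := by
    rw [Matrix.one_fin_two]
    norm_num
  map_mul' p q := by
    rw [Matrix.mul_fin_two]
    ext i j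
    fin_cases i <;> fin_cases j <;> simp <;> ring

lemma list_prod_phi (m : ℕ) (g : ℕ → ℂ × ℂ) :
    (List.ofFn (fun i : Fin m => Phi (g (m - (i : ℕ))))).prod
      = Phi (∏ i ∈ Finset.range m, g (i + 1)) := by
  have h1 : (List.ofFn (fun i : Fin m => Phi (g (m - (i : ℕ)))))
      = (List.ofFn (fun i : Fin m => g (m - (i : ℕ)))).map Phi := by
    rw [List.map_ofFn]; rfl
  rw [h1, ← map_list_prod Phi, List.prod_ofFn]
  congr 1
  rw [Fin.prod_univ_eq_prod_range (fun i => g (m - i)) m]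
  have := Finset.prod_range_reflect (fun j => g (j + 1)) m
  rw [← this]
  refine Finset.prod_congr rfl fun i hi => ?_
  simp only [Finset.mem_range] at hi
  congr 1
  omega

noncomputable def Ccos (m j : ℕ) : ℂ := ((Real.cos (2 * Real.pi * j / (2 * m + 1)) : ℝ) : ℂ)

lemma scalar_key (m : ℕ) (τ : ℂ) :
    ((1+τ) * (∏ i ∈ Finset.range m, (Ccos m (i+1) + τ))^2
        + (1-τ) * (∏ i ∈ Finset.range m, (Ccos m (i+1) - τ))^2 = 4 / 2^(2*m+1))
    ∧ (∏ i ∈ Finset.range m, (1 - Ccos m (i+1)))^2 = ((2*m+1 : ℕ) : ℂ)^2 / 2^(2*m) := by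
  have hn0 : (2*m+1 : ℕ) ≠ 0 := by omega
  have hNne : ((2*m+1 : ℕ) : ℂ) ≠ 0 := Nat.cast_ne_zero.2 hn0
  have hprim := Complex.isPrimitiveRoot_exp (2*m+1) hn0
  set ω : ℂ := Complex.exp (2 * ↑Real.pi * Complex.I / ((2*m+1 : ℕ) : ℂ)) with hωdef
  have hω1 : ω ^ (2*m+1) = 1 := hprim.pow_eq_one
  have hωne : ω ≠ 0 := Complex.exp_ne_zero _
  set K : ℕ → ℂ := fun j => (ω^j + ω^(2*m+1-j))/2 with hKdef
  -- trig identification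
  have hCK : ∀ j, 1 ≤ j → j ≤ 2*m → Ccos m j = K j := by
    intro j h1 h2
    have hxI : (((2 * Real.pi * j / (2 * m + 1) : ℝ) : ℂ)) * Complex.I
        = (j : ℂ) * (2 * ↑Real.pi * Complex.I / ((2*m+1 : ℕ) : ℂ)) := by
      push_cast
      ring
    have hj1 : ω ^ j = Complex.exp ((((2 * Real.pi * j / (2 * m + 1) : ℝ) : ℂ)) * Complex.I) := by
      rw [hωdef, ← Complex.exp_nat_mul, hxI]
    have hNQ : ((2*m+1:ℕ):ℂ) * (2 * ↑Real.pi * Complex.I / ((2*m+1 : ℕ) : ℂ))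
        = 2 * ↑Real.pi * Complex.I := by
      field_simp
    have hj2 : ω ^ (2*m+1-j)
        = Complex.exp (-((((2 * Real.pi * j / (2 * m + 1) : ℝ) : ℂ)) * Complex.I)) := by
      rw [hωdef, ← Complex.exp_nat_mul]
      have harg : ((2*m+1-j : ℕ) : ℂ) * (2 * ↑Real.pi * Complex.I / ((2*m+1 : ℕ) : ℂ))
          = 2 * ↑Real.pi * Complex.I
            - (((2 * Real.pi * j / (2 * m + 1) : ℝ) : ℂ)) * Complex.I := by
        rw [Nat.cast_sub (by omega)]
        linear_combination hNQ + hxI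
      rw [harg, Complex.exp_sub, Complex.exp_two_pi_mul_I, Complex.exp_neg, one_div]
    rw [hKdef]
    simp only
    rw [hj1, hj2, Ccos, Complex.ofReal_cos]
    rw [eq_div_iff (two_ne_zero)]
    rw [mul_comm]
    simpa [neg_mul] using Complex.two_cos (((2 * Real.pi * j / (2 * m + 1) : ℝ) : ℂ))
  -- quadratic root z
  obtain ⟨w, hw⟩ := Complex.isAlgClosed.exists_pow_nat_eq (τ^2 - 1) (n := 2) (by norm_num)
  set z : ℂ := -τ + w with hzdef
  have hz : z^2 + 2*τ*z + 1 = 0 := by rw [hzdef]; linear_combination hw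
  have hz0 : z ≠ 0 := by
    intro h
    rw [h] at hz
    simp at hz
  have hzi : z⁻¹ = -(z + 2*τ) := by
    field_simp
    linear_combination hz
  -- per-factor factorizations over range (2m+1)
  have hinv : ∀ j, j ≤ 2*m+1 → ω^j * ω^(2*m+1-j) = 1 := by
    intro j hj
    rw [← pow_add, show j + (2*m+1-j) = 2*m+1 by omega, hω1]
  have hfac1 : ∀ j ∈ Finset.range (2*m+1),
      τ + K j = (ω^j - z) * (ω^j - z⁻¹) / (2 * ω^j) := by
    intro j hj
    simp only [Finset.mem_range] at hj
    rw [hzi, hKdef]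
    simp only
    rw [eq_div_iff (mul_ne_zero two_ne_zero (pow_ne_zero _ hωne))]
    linear_combination hinv j (by omega) + hz
  have hfac2 : ∀ j ∈ Finset.range (2*m+1),
      K j - τ = (ω^j + z) * (ω^j + z⁻¹) / (2 * ω^j) := by
    intro j hj
    simp only [Finset.mem_range] at hj
    rw [hzi, hKdef]
    simp only
    rw [sub_eq_iff_eq_add, div_add' _ _ _ (mul_ne_zero two_ne_zero (pow_ne_zero _ hωne)),
      div_eq_div_iff (two_ne_zero) (mul_ne_zero two_ne_zero (pow_ne_zero _ hωne))]
    linear_combination (2:ℂ) * hinv j (by omega) + 2 * hz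
  -- products over all of range (2m+1)
  have hprodω : ∏ j ∈ Finset.range (2*m+1), ω^j = 1 := by
    rw [Finset.prod_pow_eq_pow_sum]
    have hs := Finset.sum_range_id_mul_two (2*m+1)
    have h2' : (2*m+1)*(2*m+1-1) = ((2*m+1)*m)*2 := by
      rw [show 2*m+1-1 = 2*m from rfl]; ring
    have hsum' : ∑ i ∈ Finset.range (2*m+1), i = (2*m+1)*m := by omega
    rw [hsum', pow_mul, hω1, one_pow]
  have hzn0 : z^(2*m+1) ≠ 0 := pow_ne_zero _ hz0
  have hsub : ∀ x : ℂ, ∏ j ∈ Finset.range (2*m+1), (ω^j - x) = -(x^(2*m+1) - 1) := by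
    intro x
    have h := prod_x_sub (2*m+1) (by omega) hprim x
    calc ∏ j ∈ Finset.range (2*m+1), (ω^j - x)
        = ∏ j ∈ Finset.range (2*m+1), (-1) * (x - ω^j) :=
          Finset.prod_congr rfl (fun i _ => by ring)
      _ = (-1)^(2*m+1) * ∏ j ∈ Finset.range (2*m+1), (x - ω^j) := by
          rw [Finset.prod_mul_distrib, Finset.prod_const, Finset.card_range]
      _ = -(x^(2*m+1) - 1) := by rw [h, Odd.neg_one_pow ⟨m, by ring⟩]; ring
  have hadd : ∀ x : ℂ, ∏ j ∈ Finset.range (2*m+1), (ω^j + x) = x^(2*m+1) + 1 := by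
    intro x
    have h := hsub (-x)
    rw [Odd.neg_pow ⟨m, by ring⟩] at h
    calc ∏ j ∈ Finset.range (2*m+1), (ω^j + x)
        = ∏ j ∈ Finset.range (2*m+1), (ω^j - (-x)) :=
          Finset.prod_congr rfl (fun i _ => by ring)
      _ = -(-x^(2*m+1) - 1) := h
      _ = x^(2*m+1) + 1 := by ring
  have hprod1 : ∏ j ∈ Finset.range (2*m+1), (τ + K j)
      = (1 - z^(2*m+1)) * (1 - (z^(2*m+1))⁻¹) / 2^(2*m+1) := by
    rw [Finset.prod_congr rfl hfac1, Finset.prod_div_distrib, Finset.prod_mul_distrib,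
      Finset.prod_mul_distrib, Finset.prod_const, Finset.card_range, hprodω, hsub z,
      hsub z⁻¹, inv_pow]
    ring
  have hprod2 : ∏ j ∈ Finset.range (2*m+1), (K j - τ)
      = (z^(2*m+1) + 1) * ((z^(2*m+1))⁻¹ + 1) / 2^(2*m+1) := by
    rw [Finset.prod_congr rfl hfac2, Finset.prod_div_distrib, Finset.prod_mul_distrib,
      Finset.prod_mul_distrib, Finset.prod_const, Finset.card_range, hprodω, hadd z,
      hadd z⁻¹, inv_pow]
    ring
  have hsum : (∏ j ∈ Finset.range (2*m+1), (τ + K j))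
      + (∏ j ∈ Finset.range (2*m+1), (K j - τ)) = 4 / 2^(2*m+1) := by
    have h4 : (1 - z^(2*m+1)) * (1 - (z^(2*m+1))⁻¹)
        + (z^(2*m+1) + 1) * ((z^(2*m+1))⁻¹ + 1) = 4 := by
      field_simp
      ring
    rw [hprod1, hprod2, ← add_div, h4]
  -- reflection symmetry
  have hKsym : ∀ j, 1 ≤ j → j ≤ 2*m → K (2*m+1-j) = K j := by
    intro j h1 h2
    rw [hKdef]
    simp only
    rw [show 2*m+1-(2*m+1-j) = j by omega, add_comm]
  have hK0 : K 0 = 1 := by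
    rw [hKdef]
    simp only
    rw [pow_zero, Nat.sub_zero, hω1]
    norm_num
  have hrefl1 : ∏ j ∈ Finset.range (2*m+1), (τ + K j)
      = (1+τ) * (∏ i ∈ Finset.range m, (Ccos m (i+1) + τ))^2 := by
    rw [prod_reflect m (fun j => τ + K j) (fun j h1 h2 => by simp only [hKsym j h1 h2]), hK0]
    congr 1
    · ring
    · congr 1
      refine Finset.prod_congr rfl fun i hi => ?_
      simp only [Finset.mem_range] at hi
      rw [hCK (i+1) (by omega) (by omega), add_comm]
  have hrefl2 : ∏ j ∈ Finset.range (2*m+1), (K j - τ)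
      = (1-τ) * (∏ i ∈ Finset.range m, (Ccos m (i+1) - τ))^2 := by
    rw [prod_reflect m (fun j => K j - τ) (fun j h1 h2 => by simp only [hKsym j h1 h2]), hK0]
    congr 2
    refine Finset.prod_congr rfl fun i hi => ?_
    simp only [Finset.mem_range] at hi
    rw [hCK (i+1) (by omega) (by omega)]
  constructor
  · rw [← hrefl1, ← hrefl2, hsum]
  · -- second part
    have hfac3 : ∀ j ∈ Finset.Ico 1 (2*m+1),
        1 - K j = (1 - ω^j) * (1 - ω^(2*m+1-j)) / 2 := by
      intro j hj
      simp only [Finset.mem_Ico] at hj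
      rw [hKdef]
      simp only
      rw [eq_div_iff (two_ne_zero (α := ℂ))]
      linear_combination - hinv j (by omega)
    have hIcoprod : ∏ j ∈ Finset.Ico 1 (2*m+1), (1 - K j) = ((2*m+1:ℕ):ℂ)^2 / 2^(2*m) := by
      rw [Finset.prod_congr rfl hfac3, Finset.prod_div_distrib, Finset.prod_mul_distrib,
        Finset.prod_const, Nat.card_Ico,
        show ∏ j ∈ Finset.Ico 1 (2*m+1), (1 - ω^(2*m+1-j))
          = ∏ j ∈ Finset.Ico 1 (2*m+1), (1-ω^j) from
            prod_refl_Ico (2*m+1) (fun j => 1 - ω^j),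
        prod_one_sub (2*m+1) (by omega) hprim,
        show 2*m+1-1 = 2*m from rfl]
      ring
    have hrefl3 : ∏ j ∈ Finset.Ico 1 (2*m+1), (1 - K j)
        = (∏ i ∈ Finset.range m, (1 - Ccos m (i+1)))^2 := by
      rw [prod_reflect' m (fun j => 1 - K j) (fun j h1 h2 => by simp only [hKsym j h1 h2])]
      congr 1
      refine Finset.prod_congr rfl fun i hi => ?_
      simp only [Finset.mem_range] at hi
      rw [hCK (i+1) (by omega) (by omega)]
    rw [← hrefl3, hIcoprod]


/-- With the closed-form relaxation parameters `α_j = 1/(1 − cos(2πj/(2m+1)))`,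
the eigenvalues of `S E_c S` are exactly `0` and `1/(2m+1)²`, independent of `λ`. -/
theorem clustered_block_spectrum (m : ℕ) (hm : 1 ≤ m) (lam τ : ℂ)
    (hτ : τ ^ 2 = lam) (α : ℕ → ℂ)
    (hα : ∀ j ∈ Finset.Icc 1 m,
      α j = (1 - (Real.cos (2 * Real.pi * j / (2 * m + 1)) : ℂ))⁻¹) :
    let E : ℕ → Matrix (Fin 2) (Fin 2) ℂ := fun j =>
      !![1 - α j, -(α j * τ); -(α j * τ), 1 - α j]
    let S : Matrix (Fin 2) (Fin 2) ℂ :=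
      (List.ofFn (fun i : Fin m => E (m - (i : ℕ)))).prod
    let Ec : Matrix (Fin 2) (Fin 2) ℂ := !![1, τ; 0, 0]
    spectrum ℂ (S * Ec * S) = {0, 1 / ((2 * (m : ℂ) + 1) ^ 2)} := by
  intro E S Ec
  set g : ℕ → ℂ × ℂ := fun j => (1 - α j * (1+τ), 1 - α j * (1-τ)) with hgdef
  have hE : ∀ j, E j = Phi (g j) := by
    intro j
    show _ = !![((g j).1 + (g j).2)/2, ((g j).1 - (g j).2)/2;
      ((g j).1 - (g j).2)/2, ((g j).1 + (g j).2)/2]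
    rw [hgdef]
    simp only [E]
    ext i k
    fin_cases i <;> fin_cases k <;> simp <;> ring
  set P : ℂ × ℂ := ∏ i ∈ Finset.range m, g (i + 1) with hPdef
  have hS : S = Phi P := by
    show (List.ofFn (fun i : Fin m => E (m - (i : ℕ)))).prod = _
    rw [show (List.ofFn (fun i : Fin m => E (m - (i : ℕ))))
        = (List.ofFn (fun i : Fin m => Phi (g (m - (i : ℕ))))) from by
      congr 1; funext i; exact hE _]
    rw [list_prod_phi, hPdef]
  set p : ℂ := (P.1 + P.2)/2 with hpdef
  set q : ℂ := (P.1 - P.2)/2 with hqdef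
  have hPhiP : Phi P = !![p, q; q, p] := rfl
  have hM : S * Ec * S
      = !![p^2 + p*q*τ, p*q + p^2*τ; p*q + q^2*τ, q^2 + p*q*τ] := by
    rw [hS, hPhiP]
    show (!![p, q; q, p] * !![1, τ; 0, 0]) * !![p, q; q, p] = _
    rw [Matrix.mul_fin_two, Matrix.mul_fin_two]
    ext i k
    fin_cases i <;> fin_cases k <;> simp <;> ring
  -- identify A and B
  have hA : P.1 = ∏ i ∈ Finset.range m, (1 - α (i+1) * (1+τ)) := by
    rw [hPdef, Prod.fst_prod]
  have hB : P.2 = ∏ i ∈ Finset.range m, (1 - α (i+1) * (1-τ)) := by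
    rw [hPdef, Prod.snd_prod]
  set A : ℂ := P.1
  set B : ℂ := P.2
  -- the scalar identity
  have hα' : ∀ i ∈ Finset.range m, α (i+1) = (1 - Ccos m (i+1))⁻¹ := by
    intro i hi
    simp only [Finset.mem_range] at hi
    have := hα (i+1) (Finset.mem_Icc.2 ⟨by omega, by omega⟩)
    rw [this, Ccos]
  obtain ⟨key1, key2⟩ := scalar_key m τ
  set D : ℂ := ∏ i ∈ Finset.range m, (1 - Ccos m (i+1)) with hDdef
  have hNne : ((2*m+1 : ℕ) : ℂ) ≠ 0 := Nat.cast_ne_zero.2 (by omega)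
  have hD0 : D ≠ 0 := by
    intro h
    have h2 : ((2*m+1:ℕ):ℂ)^2 / 2^(2*m) = 0 := by rw [← key2, h]; ring
    rw [_root_.div_eq_zero_iff] at h2
    rcases h2 with h2 | h2
    · exact hNne (pow_eq_zero_iff (two_ne_zero) |>.1 h2)
    · exact (pow_ne_zero (2*m) (two_ne_zero' ℂ)) h2
  have hfactors : ∀ i ∈ Finset.range m, (1 - Ccos m (i+1)) ≠ 0 :=
    Finset.prod_ne_zero_iff.1 hD0
  have hDA : D * A = ∏ i ∈ Finset.range m, (-(Ccos m (i+1) + τ)) := by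
    rw [hDdef, hA, ← Finset.prod_mul_distrib]
    refine Finset.prod_congr rfl fun i hi => ?_
    rw [hα' i hi]
    have e : (1 - Ccos m (i+1)) * (1 - Ccos m (i+1))⁻¹ = 1 :=
      mul_inv_cancel₀ (hfactors i hi)
    linear_combination (-1-τ) * e
  have hDB : D * B = ∏ i ∈ Finset.range m, (-(Ccos m (i+1) - τ)) := by
    rw [hDdef, hB, ← Finset.prod_mul_distrib]
    refine Finset.prod_congr rfl fun i hi => ?_
    rw [hα' i hi]
    have e : (1 - Ccos m (i+1)) * (1 - Ccos m (i+1))⁻¹ = 1 :=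
      mul_inv_cancel₀ (hfactors i hi)
    linear_combination (τ-1) * e
  have hDA2 : (D * A)^2 = (∏ i ∈ Finset.range m, (Ccos m (i+1) + τ))^2 := by
    rw [hDA]
    rw [show (∏ i ∈ Finset.range m, (-(Ccos m (i+1) + τ)))
        = (-1)^m * ∏ i ∈ Finset.range m, (Ccos m (i+1) + τ) from by
      calc ∏ i ∈ Finset.range m, (-(Ccos m (i+1) + τ))
          = ∏ i ∈ Finset.range m, ((-1) * (Ccos m (i+1) + τ)) :=
            Finset.prod_congr rfl fun i _ => by ring
        _ = (-1)^m * ∏ i ∈ Finset.range m, (Ccos m (i+1) + τ) := by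
            rw [Finset.prod_mul_distrib, Finset.prod_const, Finset.card_range]]
    rw [mul_pow, ← pow_mul, mul_comm m 2, pow_mul, neg_one_sq, one_pow, one_mul]
  have hDB2 : (D * B)^2 = (∏ i ∈ Finset.range m, (Ccos m (i+1) - τ))^2 := by
    rw [hDB]
    rw [show (∏ i ∈ Finset.range m, (-(Ccos m (i+1) - τ)))
        = (-1)^m * ∏ i ∈ Finset.range m, (Ccos m (i+1) - τ) from by
      calc ∏ i ∈ Finset.range m, (-(Ccos m (i+1) - τ))
          = ∏ i ∈ Finset.range m, ((-1) * (Ccos m (i+1) - τ)) :=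
            Finset.prod_congr rfl fun i _ => by ring
        _ = (-1)^m * ∏ i ∈ Finset.range m, (Ccos m (i+1) - τ) := by
            rw [Finset.prod_mul_distrib, Finset.prod_const, Finset.card_range]]
    rw [mul_pow, ← pow_mul, mul_comm m 2, pow_mul, neg_one_sq, one_pow, one_mul]
  set t : ℂ := p^2 + q^2 + 2*p*q*τ with htdef
  have ht2 : 2 * D^2 * t = (1+τ)*(D*A)^2 + (1-τ)*(D*B)^2 := by
    rw [htdef, hpdef, hqdef]
    ring
  have hkey : 2 * D^2 * t = 4 / 2^(2*m+1) := by
    rw [ht2, hDA2, hDB2, key1]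
  have h2pow : (2:ℂ)^(2*m) ≠ 0 := pow_ne_zero _ two_ne_zero
  have h2pow1 : (2:ℂ)^(2*m+1) ≠ 0 := pow_ne_zero _ two_ne_zero
  have ht : t = 1 / ((2*(m:ℂ)+1)^2) := by
    have hD2 : D^2 = ((2*m+1:ℕ):ℂ)^2 / 2^(2*m) := key2
    have hcast : ((2*m+1:ℕ):ℂ) = 2*(m:ℂ)+1 := by push_cast; ring
    have hNne' : (2*(m:ℂ)+1) ≠ 0 := by rw [← hcast]; exact hNne
    have hD2ne : D^2 ≠ 0 := pow_ne_zero _ hD0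
    have hstep : t = (4 / 2^(2*m+1)) / (2 * D^2) := by
      rw [eq_div_iff (mul_ne_zero two_ne_zero hD2ne), ← hkey]
      ring
    rw [hstep, hD2, hcast, pow_succ]
    field_simp
    ring
  -- spectrum computation
  ext x
  simp only [Set.mem_insert_iff, Set.mem_singleton_iff]
  rw [spectrum.mem_iff, Matrix.isUnit_iff_isUnit_det, isUnit_iff_ne_zero, not_not]
  have halg : (algebraMap ℂ (Matrix (Fin 2) (Fin 2) ℂ)) x = !![x, 0; 0, x] := by
    ext i k
    fin_cases i <;> fin_cases k <;> simp [Matrix.algebraMap_matrix_apply]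
  have hdet : (!![x,0;0,x] - !![p^2 + p*q*τ, p*q + p^2*τ; p*q + q^2*τ, q^2 + p*q*τ]).det
      = x * (x - t) := by
    rw [show (!![x,0;0,x] - !![p^2 + p*q*τ, p*q + p^2*τ; p*q + q^2*τ, q^2 + p*q*τ])
        = !![x - (p^2 + p*q*τ), -(p*q + p^2*τ); -(p*q + q^2*τ), x - (q^2 + p*q*τ)] from by
      ext i k
      fin_cases i <;> fin_cases k <;> simp]
    rw [Matrix.det_fin_two_of, htdef]
    ring
  rw [halg, hM, hdet, ht, mul_eq_zero, sub_eq_zero]
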